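/- Let (p₁,p₁'), (p₂,p₂'), (p₃,p₃') be three pairs of integers. Call a permutation τ of {1,2,3} admissible if, writing ((p,p'),(q,q'),(k,k')) for the triple reordered by τ, one has p+q+k = 0, p'+q'+k' = 0, 2·k'^2 > 3·k^2, and the ordered pair ((p,p'),(q,q')) satisfies the Proposition 5.1 constraints. If at least one permutation of {1,2,3} is admissible, then exactly two of the six permutations are admissible. -/
import Mathlib


/-- The constraints of Proposition 5.1 on an ordered pair of pairs of integers
`((p,p'),(q,q'))`. -/
def Prop51Constraints (p p' q q' : ℤ) : Prop :=
  0 < p * q' - q * p' ∧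
  (0 < p' * q' ∨ 0 < q' - p') ∧
  ((p < 0 → 3 * p ^ 2 < 2 * p' ^ 2) ∧ (2 * p' ^ 2 < 3 * p ^ 2 → 0 < p)) ∧
  ((q < 0 → 3 * q ^ 2 < 2 * q' ^ 2) ∧ (2 * q' ^ 2 < 3 * q ^ 2 → 0 < q))

/-- A permutation `τ` of `{1,2,3}` is admissible for the triple of integer pairs `P` if,
writing `((p,p'),(q,q'),(k,k'))` for the triple reordered by `τ`, one has
`p+q+k = 0`, `p'+q'+k' = 0`, `2·k'^2 > 3·k^2`, and `((p,p'),(q,q'))` satisfies the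
Proposition 5.1 constraints. -/
def AdmissiblePerm (P : Fin 3 → ℤ × ℤ) (τ : Equiv.Perm (Fin 3)) : Prop :=
  (P (τ 0)).1 + (P (τ 1)).1 + (P (τ 2)).1 = 0 ∧
  (P (τ 0)).2 + (P (τ 1)).2 + (P (τ 2)).2 = 0 ∧
  3 * (P (τ 2)).1 ^ 2 < 2 * (P (τ 2)).2 ^ 2 ∧
  Prop51Constraints (P (τ 0)).1 (P (τ 0)).2 (P (τ 1)).1 (P (τ 1)).2

/-- The permutation-free part of admissibility: `2k'^2 > 3k^2` and the
Proposition 5.1 constraints on `((p,p'),(q,q'))`. -/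
def Adm (p p' q q' k k' : ℤ) : Prop :=
  3 * k ^ 2 < 2 * k' ^ 2 ∧ Prop51Constraints p p' q q'

lemma nat6 : ∀ a : ℕ, ∀ b : ℕ, a^2 = 6*b^2 → a = 0 := by
  intro a
  induction a using Nat.strong_induction_on with
  | _ a ih =>
    intro b h
    rcases Nat.eq_zero_or_pos a with h0 | h0
    · exact h0
    · have h2 : 2 ∣ a := by
        have : 2 ∣ a^2 := ⟨3*b^2, by linarith⟩
        exact (Nat.Prime.dvd_of_dvd_pow Nat.prime_two this)
      obtain ⟨c, rfl⟩ := h2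
      have h3 : 2*c^2 = 3*b^2 := by ring_nf at h ⊢; omega
      have h4 : 2 ∣ b := by
        have : 2 ∣ b^2 := by omega
        exact (Nat.Prime.dvd_of_dvd_pow Nat.prime_two this)
      obtain ⟨d, rfl⟩ := h4
      have h5 : c^2 = 6*d^2 := by ring_nf at h3 ⊢; omega
      have := ih c (by omega) d h5
      omega

lemma int6 (q q' : ℤ) (h : 3*q^2 = 2*q'^2) : q = 0 ∧ q' = 0 := by
  have h1 : (2*q'.natAbs)^2 = 6 * q.natAbs^2 := by
    zify
    push_cast [sq_abs]
    nlinarith [sq_abs q, sq_abs q']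
  have := nat6 (2*q'.natAbs) q.natAbs h1
  have hq' : q' = 0 := by omega
  refine ⟨by nlinarith [sq_nonneg q], hq'⟩

lemma signs (p' q' k' : ℤ) (hs : p' + q' + k' = 0) (hp : p' ≠ 0) (hq : q' ≠ 0) (hk : k' ≠ 0)
    (h1 : 0 < p'*q' ∨ 0 < q' - p') :
    ¬((0 < q'*k' ∨ 0 < k' - q') ∧ (0 < k'*p' ∨ 0 < p' - k')) ∧
    ((0 < q'*k' ∨ 0 < k' - q') ∨ (0 < k'*p' ∨ 0 < p' - k')) := by
  rcases lt_trichotomy p' 0 with hp1 | hp1 | hp1 <;>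
  rcases lt_trichotomy q' 0 with hq1 | hq1 | hq1 <;>
  rcases lt_trichotomy k' 0 with hk1 | hk1 | hk1 <;>
  rcases h1 with h1 | h1 <;>
    first
      | omega
      | nlinarith
      | (constructor
         · rintro ⟨h2 | h2, h3 | h3⟩ <;> nlinarith
         · first
             | (left; left; nlinarith)
             | (left; right; omega)
             | (right; left; nlinarith)
             | (right; right; omega))

lemma lemA (p p' q q' : ℤ) (hp : 0 < p) (hq : 0 < q)
    (f1 : 2*p'^2 < 3*p^2) (f2 : 2*q'^2 < 3*q^2)
    (hIc : 3*(-p-q)^2 < 2*(-p'-q')^2) : False := by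
  have h9 : 4*(p'*q')^2 < 9*(p*q)^2 := by nlinarith
  have h10 : 2*(p'*q') < 3*(p*q) := by nlinarith [mul_pos hp hq]
  nlinarith [mul_pos hp hq]

lemma lemB (p p' q q' : ℤ) (hp : 0 < p) (hq : 0 < q) (hp' : p' < 0) (hq' : q' < 0)
    (f1 : 2*p'^2 < 3*p^2) (f2 : 3*q^2 < 2*q'^2)
    (hD : 0 < p*q' - q*p') : False := by
  have h1 : q*(-p') > p*(-q') := by nlinarith
  have hB : 0 < p*(-q') := mul_pos hp (neg_pos.2 hq')
  have h2 : (q*p')^2 > (p*q')^2 := by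
    nlinarith [mul_pos (sub_pos.2 h1) (show 0 < q*(-p') + p*(-q') by linarith)]
  nlinarith [mul_lt_mul_of_pos_left f1 (mul_pos hq hq),
    mul_lt_mul_of_pos_left f2 (mul_pos hp hp)]

set_option maxHeartbeats 1000000 in
lemma lemC (p u q' m : ℤ) (hp : 0 < p) (hu : 0 < u) (hq' : 0 < q') (hm : 0 < m)
    (hk' : q' < u)
    (f1 : 2*u^2 < 3*p^2) (f2 : 3*m^2 < 2*q'^2)
    (hIc : 3*(p-m)^2 < 2*(u-q')^2) : False := by
  have hq'm : m < q' := by nlinarith [sq_nonneg (m - q'), sq_nonneg (m + q')]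
  have hpm : m < p := by nlinarith [sq_nonneg (p - m), sq_nonneg (p + m)]
  have key : 6*(u*m)^2 < 6*(p*q')^2 := by
    nlinarith [mul_lt_mul f1 (le_of_lt f2) (by positivity) (by positivity)]
  have a3 : u*m < p*q' := by nlinarith [mul_pos hp hq']
  nlinarith [mul_pos (sub_pos.2 a3) (mul_pos hu hq'),
    mul_pos (sub_pos.2 hpm) (sub_pos.2 hk'),
    mul_pos (sub_pos.2 hq'm) (sub_pos.2 hpm),
    sq_nonneg (p*q' - u*m), sq_nonneg (p - m), sq_nonneg (u - q'),
    mul_pos hp hm, mul_pos hu hq']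

lemma lemCq0 (p u q' q : ℤ) (hp : 0 < p) (hu : 0 < u) (hq' : 0 < q') (hq : 0 ≤ q)
    (hk' : q' < u) (f1 : 2*u^2 < 3*p^2)
    (hIc : 3*(p+q)^2 < 2*(u-q')^2) : False := by
  nlinarith [mul_nonneg hq (by linarith : (0:ℤ) ≤ 2*p + q),
    mul_pos hq' (show 0 < 2*u - q' by linarith)]

set_option maxHeartbeats 1000000 in
lemma caseO (p p' q q' : ℤ)
    (h : Adm p p' q q' (-p-q) (-p'-q')) (hOa : 2*p'^2 < 3*p^2) :
    Adm (-p-q) (-p'-q') p p' q q' := by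
  obtain ⟨hIc, hD, hX1, hca, hcb⟩ := h
  have hp : 0 < p := hca.2 hOa
  have hIb : 3*q^2 < 2*q'^2 := by
    by_contra hc
    push_neg at hc
    rcases lt_or_eq_of_le hc with hOb | heq
    · exact lemA p p' q q' hp (hcb.2 hOb) hOa hOb hIc
    · obtain ⟨hq0, hq'0⟩ := int6 q q' heq.symm
      subst hq0; subst hq'0
      simp at hD
  refine ⟨hIb, ?_, ?_, ?_, hca⟩
  · have e : (-p-q)*p' - p*(-p'-q') = p*q' - q*p' := by ring
    rw [e]; exact hD
  · by_contra hX3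
    push_neg at hX3
    obtain ⟨hX3a, hX3b⟩ := hX3
    have hk'ne : (-p'-q') ≠ 0 := by
      intro h0; rw [h0] at hIc; nlinarith [sq_nonneg (-p-q)]
    have hk'pos : 0 < -p'-q' := by
      rcases lt_trichotomy (-p'-q') 0 with h0 | h0 | h0
      · nlinarith
      · exact absurd h0 hk'ne
      · exact h0
    have hp'le : p' ≤ 0 := by nlinarith
    rcases lt_or_eq_of_le hp'le with hp'neg | hp'eq
    · rcases lt_trichotomy q' 0 with hq'neg | hq'eq | hq'pos
      · have hq : 0 < q := by nlinarith
        exact lemB p p' q q' hp hq hp'neg hq'neg hOa hIb hD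
      · rw [hq'eq] at hIb; nlinarith [sq_nonneg q]
      · rcases le_or_gt 0 q with hq0 | hq0
        · refine lemCq0 p (-p') q' q hp (by linarith) hq'pos hq0 (by linarith) (by nlinarith) ?_
          nlinarith [hIc]
        · refine lemC p (-p') q' (-q) hp (by linarith) hq'pos (by linarith) (by linarith)
            (by nlinarith) (by nlinarith) ?_
          nlinarith [hIc]
    · rw [← hp'eq] at hD hk'pos
      nlinarith [mul_pos hp (show 0 < -q' by linarith)]
  · exact ⟨fun _ => hIc, fun h2 => absurd hIc (by linarith)⟩

lemma caseOb (p p' q q' : ℤ)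
    (h : Adm p p' q q' (-p-q) (-p'-q')) (hOb : 2*q'^2 < 3*q^2) :
    Adm q q' (-p-q) (-p'-q') p p' := by
  have h' : Adm q (-q') p (-p') (-q-p) (-(-q')-(-p')) := by
    unfold Adm Prop51Constraints at h ⊢
    obtain ⟨h0, h1, h2, h4, h5⟩ := h
    refine ⟨by nlinarith, by nlinarith, ?_, ?_, ?_⟩
    · rcases h2 with h2 | h2
      · left; nlinarith
      · right; omega
    · exact ⟨fun hq => by nlinarith [h5.1 hq], fun hq => h5.2 (by nlinarith)⟩
    · exact ⟨fun hq => by nlinarith [h4.1 hq], fun hq => h4.2 (by nlinarith)⟩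
  have out := caseO q (-q') p (-p') h' (by nlinarith)
  unfold Adm Prop51Constraints at out ⊢
  obtain ⟨o1, o2, o3, o4, o5⟩ := out
  refine ⟨by nlinarith, by nlinarith, ?_, ?_, ?_⟩
  · rcases o3 with o3 | o3
    · left; nlinarith
    · right; omega
  · exact ⟨fun hq => by nlinarith [o5.1 hq], fun hq => o5.2 (by nlinarith)⟩
  · exact ⟨fun hq => by nlinarith [o4.1 (by omega)], fun hq => by nlinarith [o4.2 (by nlinarith)]⟩

/-- The key dichotomy: given one admissible cyclic ordering, the reversed orderings all
fail, and exactly one of the two other cyclic orderings is admissible. -/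
lemma six (p p' q q' k k' : ℤ) (hk : p + q + k = 0) (hk' : p' + q' + k' = 0)
    (h : Adm p p' q q' k k') :
    ¬ Adm q q' p p' k k' ∧ ¬ Adm p p' k k' q q' ∧ ¬ Adm k k' q q' p p' ∧
    ((Adm q q' k k' p p' ∧ ¬ Adm k k' p p' q q') ∨
     (Adm k k' p p' q q' ∧ ¬ Adm q q' k k' p p')) := by
  obtain rfl : k = -p-q := by omega
  obtain rfl : k' = -p'-q' := by omega
  obtain ⟨hIc, hD, hX1, hca, hcb⟩ := h
  have hk'ne : -p'-q' ≠ 0 := fun h0 => by rw [h0] at hIc; nlinarith [sq_nonneg (-p-q)]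
  refine ⟨?_, ?_, ?_, ?_⟩
  · rintro ⟨-, hD2, -⟩; nlinarith
  · rintro ⟨-, hD2, -⟩; nlinarith
  · rintro ⟨-, hD2, -⟩; nlinarith
  · by_cases hIa : 3*p^2 < 2*p'^2
    · by_cases hIb : 3*q^2 < 2*q'^2
      · have hp'ne : p' ≠ 0 := fun h0 => by rw [h0] at hIa; nlinarith [sq_nonneg p]
        have hq'ne : q' ≠ 0 := fun h0 => by rw [h0] at hIb; nlinarith [sq_nonneg q]
        obtain ⟨snb, sor⟩ := signs p' q' (-p'-q') (by ring) hp'ne hq'ne hk'ne hX1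
        have crossbc : (0:ℤ) < q*(-p'-q') - (-p-q)*q' := by nlinarith
        have crossca : (0:ℤ) < (-p-q)*p' - p*(-p'-q') := by nlinarith
        have cck : ((-p-q) < 0 → 3*(-p-q)^2 < 2*(-p'-q')^2) ∧
            (2*(-p'-q')^2 < 3*(-p-q)^2 → 0 < -p-q) :=
          ⟨fun _ => hIc, fun h2 => absurd hIc (by linarith)⟩
        rcases sor with hX2 | hX3
        · left
          refine ⟨⟨hIa, crossbc, ?_, hcb, cck⟩, ?_⟩
          · rcases hX2 with hX2 | hX2
            · left; nlinarith
            · right; omega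
          · rintro ⟨-, -, hX3, -⟩
            refine snb ⟨hX2, ?_⟩
            rcases hX3 with hX3 | hX3
            · left; nlinarith
            · right; omega
        · right
          refine ⟨⟨hIb, crossca, ?_, cck, hca⟩, ?_⟩
          · rcases hX3 with hX3 | hX3
            · left; nlinarith
            · right; omega
          · rintro ⟨-, -, hX2, -⟩
            refine snb ⟨?_, hX3⟩
            rcases hX2 with hX2 | hX2
            · left; nlinarith
            · right; omega
      · push_neg at hIb
        rcases lt_or_eq_of_le hIb with hOb | heq
        · left
          refine ⟨caseOb p p' q q' ⟨hIc, hD, hX1, hca, hcb⟩ hOb, ?_⟩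
          rintro ⟨hIb2, -⟩; linarith
        · obtain ⟨h1, h2⟩ := int6 q q' heq.symm
          exfalso; rw [h1, h2] at hD; simp at hD
    · push_neg at hIa
      rcases lt_or_eq_of_le hIa with hOa | heq
      · right
        refine ⟨caseO p p' q q' ⟨hIc, hD, hX1, hca, hcb⟩ hOa, ?_⟩
        rintro ⟨hIa2, -⟩; linarith
      · obtain ⟨h1, h2⟩ := int6 p p' heq.symm
        exfalso; rw [h1, h2] at hD; simp at hD

lemma perm3_cases (g : Equiv.Perm (Fin 3)) :
    g = 1 ∨ g = finRotate 3 ∨ g = (finRotate 3)⁻¹ ∨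
    g = Equiv.swap 0 1 ∨ g = Equiv.swap 0 2 ∨ g = Equiv.swap 1 2 := by
  revert g; decide

theorem exactly_two_admissible_orderings (P : Fin 3 → ℤ × ℤ)
    (h : ∃ τ : Equiv.Perm (Fin 3), AdmissiblePerm P τ) :
    {τ : Equiv.Perm (Fin 3) | AdmissiblePerm P τ}.ncard = 2 := by
  classical
  obtain ⟨τ, hτ⟩ := h
  obtain ⟨hs1, hs2, hI, hP51⟩ := hτ
  have hA : Adm (P (τ 0)).1 (P (τ 0)).2 (P (τ 1)).1 (P (τ 1)).2 (P (τ 2)).1 (P (τ 2)).2 :=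
    ⟨hI, hP51⟩
  obtain ⟨n1, n2, n3, hdi⟩ := six _ _ _ _ _ _ hs1 hs2 hA
  set r : Equiv.Perm (Fin 3) := finRotate 3 with hr
  have hr0 : r 0 = 1 := by decide
  have hr1 : r 1 = 2 := by decide
  have hr2 : r 2 = 0 := by decide
  have hri0 : r⁻¹ 0 = 2 := by decide
  have hri1 : r⁻¹ 1 = 0 := by decide
  have hri2 : r⁻¹ 2 = 1 := by decide
  have hw010 : (Equiv.swap (0:Fin 3) 1) 0 = 1 := by decide
  have hw011 : (Equiv.swap (0:Fin 3) 1) 1 = 0 := by decide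
  have hw012 : (Equiv.swap (0:Fin 3) 1) 2 = 2 := by decide
  have hw020 : (Equiv.swap (0:Fin 3) 2) 0 = 2 := by decide
  have hw021 : (Equiv.swap (0:Fin 3) 2) 1 = 1 := by decide
  have hw022 : (Equiv.swap (0:Fin 3) 2) 2 = 0 := by decide
  have hw120 : (Equiv.swap (1:Fin 3) 2) 0 = 0 := by decide
  have hw121 : (Equiv.swap (1:Fin 3) 2) 1 = 2 := by decide
  have hw122 : (Equiv.swap (1:Fin 3) 2) 2 = 1 := by decide
  rcases hdi with ⟨hA2, hnA3⟩ | ⟨hA3, hnA2⟩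
  · have hset : {σ : Equiv.Perm (Fin 3) | AdmissiblePerm P σ} = {τ, τ * r} := by
      ext σ
      simp only [Set.mem_setOf_eq, Set.mem_insert_iff, Set.mem_singleton_iff]
      constructor
      · intro hσ
        rcases perm3_cases (τ⁻¹ * σ) with hc | hc | hc | hc | hc | hc
        · left; rw [inv_mul_eq_one] at hc; exact hc.symm
        · right; rw [inv_mul_eq_iff_eq_mul] at hc; exact hc
        · exfalso
          rw [inv_mul_eq_iff_eq_mul] at hc; rw [hc] at hσ
          simp only [AdmissiblePerm, Equiv.Perm.mul_apply, hri0, hri1, hri2] at hσ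
          exact hnA3 ⟨hσ.2.2.1, hσ.2.2.2⟩
        · exfalso
          rw [inv_mul_eq_iff_eq_mul] at hc; rw [hc] at hσ
          simp only [AdmissiblePerm, Equiv.Perm.mul_apply, hw010, hw011, hw012] at hσ
          exact n1 ⟨hσ.2.2.1, hσ.2.2.2⟩
        · exfalso
          rw [inv_mul_eq_iff_eq_mul] at hc; rw [hc] at hσ
          simp only [AdmissiblePerm, Equiv.Perm.mul_apply, hw020, hw021, hw022] at hσ
          exact n3 ⟨hσ.2.2.1, hσ.2.2.2⟩
        · exfalso
          rw [inv_mul_eq_iff_eq_mul] at hc; rw [hc] at hσ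
          simp only [AdmissiblePerm, Equiv.Perm.mul_apply, hw120, hw121, hw122] at hσ
          exact n2 ⟨hσ.2.2.1, hσ.2.2.2⟩
      · rintro (rfl | rfl)
        · exact ⟨hs1, hs2, hI, hP51⟩
        · simp only [AdmissiblePerm, Equiv.Perm.mul_apply, hr0, hr1, hr2]
          exact ⟨by linarith, by linarith, hA2.1, hA2.2⟩
    rw [hset]
    refine Set.ncard_pair ?_
    intro hEq
    have : (1 : Equiv.Perm (Fin 3)) = r := mul_left_cancel (a := τ) (by rw [mul_one]; exact hEq)
    exact absurd this.symm (by decide)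
  · have hset : {σ : Equiv.Perm (Fin 3) | AdmissiblePerm P σ} = {τ, τ * r⁻¹} := by
      ext σ
      simp only [Set.mem_setOf_eq, Set.mem_insert_iff, Set.mem_singleton_iff]
      constructor
      · intro hσ
        rcases perm3_cases (τ⁻¹ * σ) with hc | hc | hc | hc | hc | hc
        · left; rw [inv_mul_eq_one] at hc; exact hc.symm
        · exfalso
          rw [inv_mul_eq_iff_eq_mul] at hc; rw [hc] at hσ
          simp only [AdmissiblePerm, Equiv.Perm.mul_apply, hr0, hr1, hr2] at hσ
          exact hnA2 ⟨hσ.2.2.1, hσ.2.2.2⟩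
        · right; rw [inv_mul_eq_iff_eq_mul] at hc; exact hc
        · exfalso
          rw [inv_mul_eq_iff_eq_mul] at hc; rw [hc] at hσ
          simp only [AdmissiblePerm, Equiv.Perm.mul_apply, hw010, hw011, hw012] at hσ
          exact n1 ⟨hσ.2.2.1, hσ.2.2.2⟩
        · exfalso
          rw [inv_mul_eq_iff_eq_mul] at hc; rw [hc] at hσ
          simp only [AdmissiblePerm, Equiv.Perm.mul_apply, hw020, hw021, hw022] at hσ
          exact n3 ⟨hσ.2.2.1, hσ.2.2.2⟩
        · exfalso
          rw [inv_mul_eq_iff_eq_mul] at hc; rw [hc] at hσ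
          simp only [AdmissiblePerm, Equiv.Perm.mul_apply, hw120, hw121, hw122] at hσ
          exact n2 ⟨hσ.2.2.1, hσ.2.2.2⟩
      · rintro (rfl | rfl)
        · exact ⟨hs1, hs2, hI, hP51⟩
        · simp only [AdmissiblePerm, Equiv.Perm.mul_apply, hri0, hri1, hri2]
          exact ⟨by linarith, by linarith, hA3.1, hA3.2⟩
    rw [hset]
    refine Set.ncard_pair ?_
    intro hEq
    have : (1 : Equiv.Perm (Fin 3)) = r⁻¹ := mul_left_cancel (a := τ) (by rw [mul_one]; exact hEq)
    exact absurd this.symm (by decide)
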